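/- arXiv:2403.01303 — 5 statements merged into one kernel-verified Lean document; each statement's English description precedes it below -/
import Mathlib

section
/- If |F| > 2 and n ≥ 2, the diameter of the unitary Cayley graph C_{T_n(F)} equals 2. -/
open Matrix

/-- The subring of upper triangular `n × n` matrices over `F`. -/
def upperTri (F : Type) [Field F] (n : ℕ) : Subring (Matrix (Fin n) (Fin n) F) where
  carrier := {M | M.BlockTriangular id}
  zero_mem' := Matrix.blockTriangular_zero
  one_mem' := Matrix.blockTriangular_one
  add_mem' := fun ha hb => ha.add hb
  mul_mem' := fun ha hb => ha.mul hb
  neg_mem' := fun ha => ha.neg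

/-- The unitary Cayley graph of the ring `T_n(F)`. -/
def cayley (F : Type) [Field F] (n : ℕ) : SimpleGraph (upperTri F n) where
  Adj x y := x ≠ y ∧ IsUnit (x - y)
  symm := by
    constructor
    intro x y ⟨hne, hu⟩
    exact ⟨hne.symm, by simpa using hu.neg⟩
  loopless := ⟨fun x h => h.1 rfl⟩

lemma isUnit_of_diag {F : Type} [Field F] {n : ℕ} (M : upperTri F n)
    (h : ∀ i, (M : Matrix (Fin n) (Fin n) F) i i ≠ 0) : IsUnit M := by
  set A : Matrix (Fin n) (Fin n) F := (M : Matrix (Fin n) (Fin n) F)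
  have hA : A.BlockTriangular id := M.2
  have hdet : IsUnit A.det := by
    rw [Matrix.det_of_upperTriangular hA]
    exact isUnit_iff_ne_zero.mpr (Finset.prod_ne_zero_iff.mpr fun i _ => h i)
  have : Invertible A := A.invertibleOfIsUnitDet hdet
  have hinv : (A⁻¹).BlockTriangular id :=
    Matrix.blockTriangular_inv_of_blockTriangular hA
  refine isUnit_iff_exists.mpr ⟨⟨A⁻¹, hinv⟩, ?_, ?_⟩
  · exact Subtype.ext (A.mul_nonsing_inv hdet)
  · exact Subtype.ext (A.nonsing_inv_mul hdet)

lemma exists_sum_units {F : Type} [Field F] [Fintype F] {n : ℕ}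
    (hF : 2 < Fintype.card F) (x : upperTri F n) :
    ∃ u v : upperTri F n, IsUnit u ∧ IsUnit v ∧ x = u + v := by
  classical
  have key : ∀ c : F, ∃ a : F, a ≠ 0 ∧ a ≠ c := by
    intro c
    by_contra hcon
    push_neg at hcon
    have : (Finset.univ : Finset F) ⊆ {0, c} := by
      intro a _
      rcases eq_or_ne a 0 with rfl | ha
      · simp
      · simp [hcon a ha]
    have := Finset.card_le_card this
    rw [Finset.card_univ] at this
    have h2 : ({0, c} : Finset F).card ≤ 2 := Finset.card_insert_le _ _ |>.trans (by simp)
    omega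
  choose a ha0 hac using fun i => key ((x : Matrix (Fin n) (Fin n) F) i i)
  set U : Matrix (Fin n) (Fin n) F :=
    Matrix.of fun i j => if i = j then a i else (x : Matrix (Fin n) (Fin n) F) i j with hU
  have hUtri : U.BlockTriangular id := by
    intro i j hij
    have : i ≠ j := by
      intro h; subst h; exact absurd hij (lt_irrefl _)
    simp only [hU, Matrix.of_apply]
    rw [if_neg this]
    exact x.2 hij
  set V : Matrix (Fin n) (Fin n) F :=
    Matrix.diagonal (fun i => (x : Matrix (Fin n) (Fin n) F) i i - a i) with hV
  have hVtri : V.BlockTriangular id := Matrix.blockTriangular_diagonal _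
  refine ⟨⟨U, hUtri⟩, ⟨V, hVtri⟩, ?_, ?_, ?_⟩
  · exact isUnit_of_diag _ (fun i => by simpa [hU] using ha0 i)
  · refine isUnit_of_diag _ (fun i => ?_)
    simpa [hV, sub_eq_zero] using fun h => (hac i) h.symm
  · apply Subtype.ext
    ext i j
    by_cases h : i = j
    · subst h; simp [hU, hV]
    · simp [hU, hV, h, Matrix.diagonal_apply_ne _ h]

/-- If `|F| > 2` and `n ≥ 2`, then the diameter of `C_{T_n(F)}` equals `2`. -/
theorem stmt5 (F : Type) [Field F] [Fintype F] (n : ℕ) (hn : 2 ≤ n)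
    (hF : 2 < Fintype.card F) :
    (cayley F n).diam = 2 := by
  classical
  haveI : NeZero n := ⟨by omega⟩
  have hnontriv : Nontrivial (upperTri F n) := by
    refine ⟨1, 0, fun h => ?_⟩
    have := congrArg (fun z : upperTri F n => (z : Matrix (Fin n) (Fin n) F) 0 0) h
    simpa using this
  -- upper bound on edist
  have hub : ∀ x y : upperTri F n, (cayley F n).edist x y ≤ 2 := by
    intro x y
    rcases eq_or_ne x y with rfl | hne
    · simp [SimpleGraph.edist_self]
    obtain ⟨u, v, hu, hv, huv⟩ := exists_sum_units hF (x - y)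
    set z : upperTri F n := y + v with hz
    have hxz : (cayley F n).Adj x z := by
      refine ⟨?_, ?_⟩
      · intro h
        have hx : x = y + v := by rw [h, hz]
        rw [hx, add_sub_cancel_left] at huv
        exact hu.ne_zero (right_eq_add.mp huv)
      · have : x - z = u := by rw [hz, sub_add_eq_sub_sub, huv, add_sub_cancel_right]
        rw [this]; exact hu
    have hzy : (cayley F n).Adj z y := by
      refine ⟨?_, ?_⟩
      · intro h
        rw [hz] at h
        exact hv.ne_zero (add_eq_left.mp h)
      · have : z - y = v := by rw [hz, add_sub_cancel_left]
        rw [this]; exact hv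
    have := SimpleGraph.edist_le
      (SimpleGraph.Walk.cons hxz (SimpleGraph.Walk.cons hzy SimpleGraph.Walk.nil))
    simpa using this
  -- the pair at distance 2
  set E : Matrix (Fin n) (Fin n) F := Matrix.single (0 : Fin n) (1 : Fin n) 1 with hE
  have h01 : (0 : Fin n) ≠ (1 : Fin n) := by
    intro h
    have h2 := congrArg Fin.val h
    simp [Fin.val_one'] at h2
    omega
  have hEtri : E.BlockTriangular id := by
    apply Matrix.blockTriangular_single
    show (0 : Fin n) ≤ 1
    exact Fin.zero_le _
  set e : upperTri F n := ⟨E, hEtri⟩ with he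
  have hEne : e ≠ 0 := by
    intro h
    have := congrArg (fun z : upperTri F n => (z : Matrix (Fin n) (Fin n) F) 0 1) h
    simp [he, hE, Matrix.single_apply_same] at this
  have hEnotunit : ¬ IsUnit e := by
    intro h
    have h2 : IsUnit E := by
      have := h.map (upperTri F n).subtype
      simpa [he] using this
    have hdet : IsUnit E.det := E.isUnit_iff_isUnit_det.mp h2
    have : E.det = 0 := by
      apply Matrix.det_eq_zero_of_column_eq_zero 0
      intro i
      simp [hE, Matrix.single]
      omega
    rw [this] at hdet
    simpa using hdet
  have hnotadj : ¬ (cayley F n).Adj e 0 := by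
    intro ⟨_, hu⟩
    simp only [sub_zero] at hu
    exact hEnotunit hu
  have hedist2 : (cayley F n).edist e 0 = 2 := by
    have hle := hub e 0
    have hne0 : (cayley F n).edist e 0 ≠ 0 := by
      rw [Ne, SimpleGraph.edist_eq_zero_iff]
      exact hEne
    have hne1 : (cayley F n).edist e 0 ≠ 1 := by
      rw [Ne, SimpleGraph.edist_eq_one_iff_adj]
      exact hnotadj
    have hnetop : (cayley F n).edist e 0 ≠ ⊤ := by
      intro h; rw [h] at hle; exact absurd hle (by simp)
    lift (cayley F n).edist e 0 to ℕ using hnetop with k hk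
    have h1 : k ≤ 2 := by exact_mod_cast hle
    have h0 : k ≠ 0 := fun h => hne0 (by simp [h])
    have h1' : k ≠ 1 := fun h => hne1 (by simp [h])
    have : k = 2 := by omega
    rw [this]
    rfl
  have hediam : (cayley F n).ediam = 2 := by
    apply le_antisymm
    · exact SimpleGraph.ediam_le_of_edist_le (fun u v => hub u v)
    · rw [← hedist2]; exact SimpleGraph.edist_le_ediam
  rw [SimpleGraph.diam, hediam]
  rfl
end

section
/- If |F| = 2, the unitary Cayley graph C_{T_n(F_2)} has exactly 2^{n−1} connected components, and each component is isomorphic to the complete bipartite graph K_{m,m} with m = 2^{n(n−1)/2}. -/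
open Matrix

section helpers
variable {F : Type} [Field F] [Fintype F] {n : ℕ}

lemma F2.mem01 (hF : Fintype.card F = 2) (x : F) : x = 0 ∨ x = 1 := by
  classical
  by_contra h
  push_neg at h
  have h1 : (0 : F) ∉ ({1} : Finset F) := by simp
  have h2 : x ∉ ({0, 1} : Finset F) := by simp [h.1, h.2]
  have h3 : ({x, 0, 1} : Finset F).card = 3 := by
    rw [Finset.card_insert_of_notMem h2, Finset.card_insert_of_notMem h1,
      Finset.card_singleton]
  have h4 := Finset.card_le_card (Finset.subset_univ ({x, 0, 1} : Finset F))
  rw [h3, Finset.card_univ, hF] at h4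
  omega

lemma F2.two (hF : Fintype.card F = 2) : (1 : F) + 1 = 0 := by
  rcases F2.mem01 hF (1 + 1) with h | h
  · exact h
  · exact absurd (add_left_cancel (h.trans (add_zero 1).symm)) one_ne_zero

lemma F2.ne_iff (hF : Fintype.card F = 2) {x y : F} : x ≠ y ↔ x = y + 1 := by
  rcases F2.mem01 hF x with hx | hx <;> rcases F2.mem01 hF y with hy | hy <;>
    subst hx <;> subst hy <;> simp [F2.two hF, eq_comm]

lemma isUnit_iff_diag (x : upperTri F n) :
    IsUnit x ↔ ∀ i, (x : Matrix (Fin n) (Fin n) F) i i ≠ 0 := by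
  constructor
  · intro h i h0
    have h2 : IsUnit (x : Matrix (Fin n) (Fin n) F) := h.map (upperTri F n).subtype
    have hd := (Matrix.isUnit_iff_isUnit_det _).mp h2
    rw [Matrix.det_of_upperTriangular x.2, isUnit_iff_ne_zero] at hd
    exact hd (Finset.prod_eq_zero (Finset.mem_univ i) h0)
  · intro h
    have hd : IsUnit (x : Matrix (Fin n) (Fin n) F).det := by
      rw [Matrix.det_of_upperTriangular x.2, isUnit_iff_ne_zero]
      exact Finset.prod_ne_zero_iff.mpr fun i _ => h i
    have h2 : Invertible (x : Matrix (Fin n) (Fin n) F) :=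
      (x : Matrix (Fin n) (Fin n) F).invertibleOfIsUnitDet hd
    have hinv : ((x : Matrix (Fin n) (Fin n) F)⁻¹).BlockTriangular id :=
      Matrix.blockTriangular_inv_of_blockTriangular x.2
    exact ⟨⟨x, ⟨(x : Matrix (Fin n) (Fin n) F)⁻¹, hinv⟩,
      Subtype.ext (by push_cast; exact Matrix.mul_nonsing_inv _ hd),
      Subtype.ext (by push_cast; exact Matrix.nonsing_inv_mul _ hd)⟩, rfl⟩

lemma adj_diag {x y : upperTri F n} (h : (cayley F n).Adj x y) (i : Fin n) :
    (x : Matrix (Fin n) (Fin n) F) i i ≠ (y : Matrix (Fin n) (Fin n) F) i i := by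
  have := (isUnit_iff_diag (x - y)).mp h.2 i
  rw [← sub_ne_zero]
  simpa using this

lemma adj_of_diag (hn : 0 < n) {x y : upperTri F n}
    (h : ∀ i, (x : Matrix (Fin n) (Fin n) F) i i ≠ (y : Matrix (Fin n) (Fin n) F) i i) :
    (cayley F n).Adj x y := by
  refine ⟨fun he => h ⟨0, hn⟩ (by rw [he]), (isUnit_iff_diag _).mpr fun i => ?_⟩
  have := h i
  rw [← sub_ne_zero] at this
  simpa using this

set_option linter.unusedSectionVars false

lemma walk_diag (hF : Fintype.card F = 2) {a b : upperTri F n}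
    (w : (cayley F n).Walk a b) :
    (∀ i, (b : Matrix (Fin n) (Fin n) F) i i = (a : Matrix (Fin n) (Fin n) F) i i) ∨
    (∀ i, (b : Matrix (Fin n) (Fin n) F) i i = (a : Matrix (Fin n) (Fin n) F) i i + 1) := by
  induction w with
  | nil => exact Or.inl fun i => rfl
  | cons h p ih =>
    have hstep := fun i => ((F2.ne_iff hF).mp (adj_diag h i).symm : _)
    rcases ih with hcb | hcb
    · right; intro i; rw [hcb i, hstep i]
    · left; intro i; rw [hcb i, hstep i, add_assoc, F2.two hF, add_zero]

lemma adj_succ (hF : Fintype.card F = 2) (hn : 0 < n) (x : upperTri F n) :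
    (cayley F n).Adj x (x + 1) := by
  refine adj_of_diag hn fun i => ?_
  have : ((x + 1 : upperTri F n) : Matrix (Fin n) (Fin n) F) i i
      = (x : Matrix (Fin n) (Fin n) F) i i + 1 := by
    push_cast
    simp [Matrix.one_apply_eq]
  rw [this]
  exact left_ne_add.mpr one_ne_zero

lemma reach_iff (hF : Fintype.card F = 2) (hn : 0 < n) (a b : upperTri F n) :
    (cayley F n).Reachable a b ↔
    ((∀ i, (b : Matrix (Fin n) (Fin n) F) i i = (a : Matrix (Fin n) (Fin n) F) i i) ∨
     (∀ i, (b : Matrix (Fin n) (Fin n) F) i i = (a : Matrix (Fin n) (Fin n) F) i i + 1)) := by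
  constructor
  · rintro ⟨w⟩; exact walk_diag hF w
  · rintro (h | h)
    · refine ((adj_succ hF hn a).reachable).trans (adj_of_diag hn fun i => ?_).reachable
      have : ((a + 1 : upperTri F n) : Matrix (Fin n) (Fin n) F) i i
          = (a : Matrix (Fin n) (Fin n) F) i i + 1 := by
        push_cast; simp [Matrix.one_apply_eq]
      rw [this, h i]
      exact (left_ne_add.mpr one_ne_zero).symm
    · refine (adj_of_diag hn fun i => ?_).reachable
      rw [h i]
      exact left_ne_add.mpr one_ne_zero

def pairsEquivSigma (n : ℕ) : {p : Fin n × Fin n // p.1 < p.2} ≃ (Σ j : Fin n, Fin j.1) where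
  toFun p := ⟨p.1.2, ⟨p.1.1.1, p.2⟩⟩
  invFun s := ⟨(⟨s.2.1, s.2.2.trans s.1.2⟩, s.1), s.2.2⟩
  left_inv p := rfl
  right_inv s := rfl

lemma card_pairs (n : ℕ) : Fintype.card {p : Fin n × Fin n // p.1 < p.2} = n * (n - 1) / 2 := by
  rw [Fintype.card_congr (pairsEquivSigma n), Fintype.card_sigma]
  simp only [Fintype.card_fin]
  exact (Fin.sum_univ_eq_sum_range (fun i => i) n).trans (Finset.sum_range_id n)

/-- Matrices in `upperTri` with fixed diagonal correspond to their strictly-upper part. -/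
def diagClassEquiv (w : Fin n → F) :
    {b : upperTri F n // ∀ i, (b : Matrix (Fin n) (Fin n) F) i i = w i} ≃
      ({p : Fin n × Fin n // p.1 < p.2} → F) where
  toFun b p := (b.1 : Matrix (Fin n) (Fin n) F) p.1.1 p.1.2
  invFun f :=
    ⟨⟨fun i j => if h : i < j then f ⟨(i, j), h⟩ else if i = j then w i else 0, by
      intro i j hji
      simp only [id_eq] at hji
      simp [asymm hji, (ne_of_lt hji).symm]⟩, by
      intro i
      simp⟩
  left_inv b := by
    refine Subtype.ext (Subtype.ext (funext fun i => funext fun j => ?_))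
    rcases lt_trichotomy i j with h | h | h
    · simp [h]
    · subst h
      simp [(b.2 i).symm]
    · have h0 : (b.1 : Matrix (Fin n) (Fin n) F) i j = 0 := b.1.2 h
      simp [asymm h, (ne_of_lt h).symm, h0]
  right_inv f := funext fun p => dif_pos p.2

lemma card_diagClass (w : Fin n → F) (hF : Fintype.card F = 2) :
    Nat.card {b : upperTri F n // ∀ i, (b : Matrix (Fin n) (Fin n) F) i i = w i} =
      2 ^ (n * (n - 1) / 2) := by
  classical
  rw [Nat.card_congr (diagClassEquiv w), Nat.card_eq_fintype_card, Fintype.card_fun, hF,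
    card_pairs]

end helpers

/-- If `|F| = 2`, the graph `C_{T_n(F)}` has exactly `2^(n-1)` connected components,
and each component (as an induced subgraph) is isomorphic to the complete bipartite
graph `K_{m,m}` with `m = 2^(n*(n-1)/2)`. -/
theorem stmt6 (F : Type) [Field F] [Fintype F] (hF : Fintype.card F = 2)
    (n : ℕ) (hn : 0 < n) :
    Nat.card (cayley F n).ConnectedComponent = 2 ^ (n - 1) ∧
    ∀ a : upperTri F n,
      Nonempty
        (((cayley F n).induce {b | (cayley F n).Reachable a b}) ≃g
          completeBipartiteGraph (Fin (2 ^ (n * (n - 1) / 2)))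
            (Fin (2 ^ (n * (n - 1) / 2)))) := by
  classical
  set i0 : Fin n := ⟨0, hn⟩ with hi0
  constructor
  · -- number of connected components
    let dmat : (Fin n → F) → upperTri F n :=
      fun v => ⟨Matrix.diagonal v, Matrix.blockTriangular_diagonal v⟩
    have dmat_apply : ∀ (v : Fin n → F) (i : Fin n),
        ((dmat v : upperTri F n) : Matrix (Fin n) (Fin n) F) i i = v i :=
      fun v i => Matrix.diagonal_apply_eq v i
    let g : {v : Fin n → F // v i0 = 0} → (cayley F n).ConnectedComponent :=
      fun v => (cayley F n).connectedComponentMk (dmat v.1)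
    have hg : Function.Bijective g := by
      constructor
      · intro v w h
        rw [SimpleGraph.ConnectedComponent.eq, reach_iff hF hn] at h
        rcases h with h | h
        · refine Subtype.ext (funext fun i => ?_)
          have := h i
          rw [dmat_apply, dmat_apply] at this
          exact this.symm
        · exfalso
          have := h i0
          rw [dmat_apply, dmat_apply, v.2, w.2, zero_add] at this
          exact one_ne_zero this.symm
      · refine SimpleGraph.ConnectedComponent.ind fun a => ?_
        by_cases h0 : (a : Matrix (Fin n) (Fin n) F) i0 i0 = 0
        · refine ⟨⟨fun i => (a : Matrix (Fin n) (Fin n) F) i i, h0⟩, ?_⟩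
          rw [SimpleGraph.ConnectedComponent.eq, reach_iff hF hn]
          exact Or.inl fun i => (dmat_apply _ i).symm
        · have h1 : (a : Matrix (Fin n) (Fin n) F) i0 i0 = 1 :=
            (F2.mem01 hF _).resolve_left h0
          refine ⟨⟨fun i => (a : Matrix (Fin n) (Fin n) F) i i + 1, by
            simp [h1, F2.two hF]⟩, ?_⟩
          rw [SimpleGraph.ConnectedComponent.eq, reach_iff hF hn]
          refine Or.inr fun i => ?_
          rw [dmat_apply, add_assoc, F2.two hF, add_zero]
    rw [← Nat.card_congr (Equiv.ofBijective g hg)]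
    let e1 : {v : Fin n → F // v i0 = 0} ≃ ({i : Fin n // i ≠ i0} → F) :=
      { toFun := fun v i => v.1 i.1
        invFun := fun f => ⟨fun i => if h : i = i0 then 0 else f ⟨i, h⟩, by simp⟩
        left_inv := fun v => Subtype.ext (funext fun i => by
          by_cases h : i = i0
          · subst h; simp [v.2]
          · simp [h])
        right_inv := fun f => funext fun i => by simp [i.2] }
    rw [Nat.card_congr e1, Nat.card_eq_fintype_card, Fintype.card_fun, hF]
    congr 1
    have hc : Fintype.card {i : Fin n // i ≠ i0} =
        Fintype.card (Fin n) - Fintype.card {i : Fin n // i = i0} :=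
      Fintype.card_subtype_compl _
    rw [hc, Fintype.card_subtype_eq, Fintype.card_fin]
  · -- each component is a complete bipartite graph
    intro a
    let da : Fin n → F := fun i => (a : Matrix (Fin n) (Fin n) F) i i
    let P : upperTri F n → Prop := fun b => ∀ i, (b : Matrix (Fin n) (Fin n) F) i i = da i
    let Q : upperTri F n → Prop := fun b => ∀ i, (b : Matrix (Fin n) (Fin n) F) i i = da i + 1
    have hPQ : ∀ b, P b → Q b → False := fun b hp hq =>
      one_ne_zero (left_eq_add.mp ((hp i0).symm.trans (hq i0)))
    have cardP : Fintype.card {b : upperTri F n // P b} = 2 ^ (n * (n - 1) / 2) := by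
      have h := card_diagClass (n := n) da hF
      rwa [Nat.card_eq_fintype_card] at h
    have cardQ : Fintype.card {b : upperTri F n // Q b} = 2 ^ (n * (n - 1) / 2) := by
      have h := card_diagClass (n := n) (fun i => da i + 1) hF
      rwa [Nat.card_eq_fintype_card] at h
    let eP : {b : upperTri F n // P b} ≃ Fin (2 ^ (n * (n - 1) / 2)) :=
      Fintype.equivFinOfCardEq cardP
    let eQ : {b : upperTri F n // Q b} ≃ Fin (2 ^ (n * (n - 1) / 2)) :=
      Fintype.equivFinOfCardEq cardQ
    let e0 : {b : upperTri F n // b ∈ {b | (cayley F n).Reachable a b}} ≃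
        {b : upperTri F n // P b ∨ Q b} :=
      Equiv.subtypeEquivRight (fun b => reach_iff hF hn a b)
    let e1 : {b : upperTri F n // P b ∨ Q b} ≃
        ({b : upperTri F n // P b} ⊕ {b : upperTri F n // Q b}) :=
      { toFun := fun b =>
          if h : P b.1 then Sum.inl ⟨b.1, h⟩ else Sum.inr ⟨b.1, b.2.resolve_left h⟩
        invFun := Sum.elim (fun b => ⟨b.1, Or.inl b.2⟩) (fun b => ⟨b.1, Or.inr b.2⟩)
        left_inv := fun b => by
          beta_reduce
          by_cases h : P b.1
          · rw [dif_pos h]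
            rfl
          · rw [dif_neg h]
            rfl
        right_inv := fun s => by
          rcases s with b | b
          · show (if h : P (b : upperTri F n) then _ else _) = _
            rw [dif_pos b.2]
            rfl
          · show (if h : P (b : upperTri F n) then _ else _) = _
            have hnp : ¬ P b.1 := fun hp => hPQ b.1 hp b.2
            rw [dif_neg hnp]
            rfl }
    let E : {b : upperTri F n // b ∈ {b | (cayley F n).Reachable a b}} ≃
        (Fin (2 ^ (n * (n - 1) / 2)) ⊕ Fin (2 ^ (n * (n - 1) / 2))) :=
      e0.trans (e1.trans (Equiv.sumCongr eP eQ))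
    have hEP : ∀ b, ((E b).isLeft = true ↔ P b.1) ∧ ((E b).isRight = true ↔ Q b.1) := by
      intro b
      by_cases h : P b.1
      · have h2 : e1 (e0 b) = Sum.inl ⟨b.1, h⟩ := dif_pos h
        have hEb : E b = Sum.inl (eP ⟨b.1, h⟩) := by
          show (Equiv.sumCongr eP eQ) (e1 (e0 b)) = _
          rw [h2]; rfl
        constructor
        · rw [hEb]; simpa using h
        · rw [hEb]
          simp only [Sum.isRight_inl]
          exact ⟨fun hx => by simp at hx, fun hq => absurd (hPQ b.1 h hq) not_false⟩
      · have hq : Q b.1 := ((reach_iff hF hn a b.1).mp b.2).resolve_left h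
        have h2 : e1 (e0 b) = Sum.inr ⟨b.1, ((e0 b).2).resolve_left h⟩ := dif_neg h
        have hEb : E b = Sum.inr (eQ ⟨b.1, ((e0 b).2).resolve_left h⟩) := by
          show (Equiv.sumCongr eP eQ) (e1 (e0 b)) = _
          rw [h2]; rfl
        constructor
        · rw [hEb]
          simp only [Sum.isLeft_inr]
          exact ⟨fun hx => by simp at hx, fun hp => absurd (hPQ b.1 hp hq) not_false⟩
        · rw [hEb]; simpa using hq
    have adjiff : ∀ b c : {b : upperTri F n // b ∈ {b | (cayley F n).Reachable a b}},
        ((cayley F n).induce {b | (cayley F n).Reachable a b}).Adj b c ↔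
          (P b.1 ∧ Q c.1 ∨ Q b.1 ∧ P c.1) := by
      intro b c
      constructor
      · intro h
        have hd := fun i => adj_diag h i
        rcases (reach_iff hF hn a b.1).mp b.2 with hP | hQ <;>
          rcases (reach_iff hF hn a c.1).mp c.2 with hP' | hQ'
        · exact absurd ((hP i0).trans (hP' i0).symm) (hd i0)
        · exact Or.inl ⟨hP, hQ'⟩
        · exact Or.inr ⟨hQ, hP'⟩
        · exact absurd ((hQ i0).trans (hQ' i0).symm) (hd i0)
      · rintro (⟨h1, h2⟩ | ⟨h1, h2⟩)
        · show (cayley F n).Adj b.1 c.1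
          refine adj_of_diag hn fun i => ?_
          rw [h1 i, h2 i]
          exact left_ne_add.mpr one_ne_zero
        · show (cayley F n).Adj b.1 c.1
          refine adj_of_diag hn fun i => ?_
          rw [h1 i, h2 i]
          exact (left_ne_add.mpr one_ne_zero).symm
    refine ⟨⟨E, ?_⟩⟩
    intro b c
    show ((E b).isLeft ∧ (E c).isRight ∨ (E b).isRight ∧ (E c).isLeft) ↔ _
    rw [(hEP b).1, (hEP c).2, (hEP b).2, (hEP c).1, adjiff b c]
end

section
/- If |F| = 2, the connected component of a matrix a in C_{T_n(F_2)} is a complete bipartite graph whose two parts are: matrices with the same diagonal as a, and matrices whose diagonal differs from that of a in every entry; each part has size 2^{n(n−1)/2}. -/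
open Matrix

/-- In a field with two elements, every element is `0` or `1`. -/
lemma twoElt {F : Type} [Field F] [Fintype F] (hF : Fintype.card F = 2) (x : F) :
    x = 0 ∨ x = 1 := by
  classical
  have h01 : (0 : F) ≠ 1 := zero_ne_one
  have hsub : ({0, 1} : Finset F) = Finset.univ := by
    apply Finset.eq_univ_of_card
    rw [hF, Finset.card_insert_of_notMem (by simp [h01]), Finset.card_singleton]
  have := Finset.mem_univ x
  rw [← hsub] at this
  simpa using this

/-- In a field with two elements, two elements different from a third are equal. -/
lemma eqOfNeNe {F : Type} [Field F] [Fintype F] (hF : Fintype.card F = 2)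
    {x y z : F} (h1 : x ≠ z) (h2 : y ≠ z) : x = y := by
  rcases twoElt hF x with hx | hx <;> rcases twoElt hF y with hy | hy <;>
    rcases twoElt hF z with hz | hz <;> simp_all

/-- An upper triangular matrix is a unit of the ring of upper triangular matrices iff
all its diagonal entries are nonzero. -/
lemma isUnitIffDiag {F : Type} [Field F] {n : ℕ} (x : upperTri F n) :
    IsUnit x ↔ ∀ i, (x : Matrix (Fin n) (Fin n) F) i i ≠ 0 := by
  constructor
  · intro h i
    have h2 : IsUnit (x : Matrix (Fin n) (Fin n) F) := h.map (upperTri F n).subtype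
    have hdet : IsUnit (x : Matrix (Fin n) (Fin n) F).det := h2.map Matrix.detMonoidHom
    rw [Matrix.det_of_upperTriangular x.2] at hdet
    intro h0
    rw [isUnit_iff_ne_zero] at hdet
    exact hdet (Finset.prod_eq_zero (Finset.mem_univ i) h0)
  · intro h
    have hdet : IsUnit (x : Matrix (Fin n) (Fin n) F).det := by
      rw [Matrix.det_of_upperTriangular x.2, isUnit_iff_ne_zero]
      exact Finset.prod_ne_zero_iff.2 fun i _ => h i
    haveI : Invertible (x : Matrix (Fin n) (Fin n) F) :=
      (x : Matrix (Fin n) (Fin n) F).invertibleOfIsUnitDet hdet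
    have hinv : (x : Matrix (Fin n) (Fin n) F)⁻¹ ∈ upperTri F n :=
      Matrix.blockTriangular_inv_of_blockTriangular x.2
    refine ⟨⟨x, ⟨_, hinv⟩, ?_, ?_⟩, rfl⟩
    · ext
      simp [Matrix.mul_nonsing_inv _ hdet]
    · ext
      simp [Matrix.nonsing_inv_mul _ hdet]

/-- The number of pairs `(i, j)` with `i < j` in `Fin n`. -/
lemma cardPairs (n : ℕ) : Nat.card {p : Fin n × Fin n // p.1 < p.2} = n * (n - 1) / 2 := by
  have e : {p : Fin n × Fin n // p.1 < p.2} ≃ Σ j : Fin n, Fin j.val :=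
    { toFun := fun p => ⟨p.1.2, ⟨p.1.1.val, p.2⟩⟩
      invFun := fun q => ⟨(⟨q.2.val, q.2.isLt.trans q.1.isLt⟩, q.1), q.2.isLt⟩
      left_inv := fun p => rfl
      right_inv := fun q => rfl }
  rw [Nat.card_congr e, Nat.card_eq_fintype_card, Fintype.card_sigma]
  simp only [Fintype.card_fin]
  rw [Fin.sum_univ_eq_sum_range (fun i => i) n, Finset.sum_range_id]

/-- The number of upper triangular matrices over a two-element field with a
prescribed diagonal. -/
lemma cardFixedDiag {F : Type} [Field F] [Fintype F] (hF : Fintype.card F = 2)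
    {n : ℕ} (d : Fin n → F) :
    Nat.card {b : upperTri F n | ∀ i, (b : Matrix (Fin n) (Fin n) F) i i = d i}
      = 2 ^ (n * (n - 1) / 2) := by
  classical
  have e : {b : upperTri F n | ∀ i, (b : Matrix (Fin n) (Fin n) F) i i = d i}
      ≃ ({p : Fin n × Fin n // p.1 < p.2} → F) :=
    { toFun := fun b p => ((b : upperTri F n) : Matrix (Fin n) (Fin n) F) p.1.1 p.1.2
      invFun := fun f =>
        ⟨⟨fun i j => if h : i < j then f ⟨(i, j), h⟩ else if i = j then d i else 0, by
          intro i j hij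
          have hji : j < i := hij
          have h1 : ¬ i < j := fun h => absurd hji (asymm h)
          have h2 : ¬ i = j := fun h => lt_irrefl i (h ▸ hji)
          simp only [dif_neg h1, if_neg h2]⟩, by
          intro i
          simp⟩
      left_inv := fun b => by
        apply Subtype.ext; apply Subtype.ext
        funext i j
        rcases lt_trichotomy i j with h | h | h
        · simp [h]
        · subst h
          simp [b.2 i]
        · have : ((b : upperTri F n) : Matrix (Fin n) (Fin n) F) i j = 0 :=
            (b : upperTri F n).2 h
          simp [not_lt_of_gt h, h.ne', this]
      right_inv := fun f => by
        funext p
        simp [p.2] }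
  rw [Nat.card_congr e, Nat.card_fun, Nat.card_eq_fintype_card, hF, cardPairs]

/-- If `|F| = 2`, the connected component of `a` in `C_{T_n(F)}` is a complete
bipartite graph, whose parts are the matrices with the same diagonal as `a` and the
matrices whose diagonal differs from that of `a` in every entry; each part has size
`2^(n*(n-1)/2)`. -/
theorem stmt8 (F : Type) [Field F] [Fintype F] (hF : Fintype.card F = 2)
    (n : ℕ) (hn : 0 < n) (a : upperTri F n) :
    let P1 : Set (upperTri F n) :=
      {b | ∀ i : Fin n, (b : Matrix (Fin n) (Fin n) F) i i = (a : Matrix (Fin n) (Fin n) F) i i}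
    let P2 : Set (upperTri F n) :=
      {b | ∀ i : Fin n, (b : Matrix (Fin n) (Fin n) F) i i ≠ (a : Matrix (Fin n) (Fin n) F) i i}
    (∀ b : upperTri F n, (cayley F n).Reachable a b ↔ b ∈ P1 ∪ P2) ∧
    (∀ b ∈ P1, ∀ c ∈ P2, (cayley F n).Adj b c) ∧
    (∀ b ∈ P1, ∀ c ∈ P1, ¬(cayley F n).Adj b c) ∧
    (∀ b ∈ P2, ∀ c ∈ P2, ¬(cayley F n).Adj b c) ∧
    Nat.card P1 = 2 ^ (n * (n - 1) / 2) ∧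
    Nat.card P2 = 2 ^ (n * (n - 1) / 2) := by
  intro P1 P2
  -- adjacency implies the diagonals differ everywhere
  have key1 : ∀ x y : upperTri F n, (cayley F n).Adj x y →
      ∀ i, (x : Matrix (Fin n) (Fin n) F) i i ≠ (y : Matrix (Fin n) (Fin n) F) i i := by
    intro x y ⟨_, hu⟩ i hxy
    have := (isUnitIffDiag (x - y)).1 hu i
    apply this
    show ((x : Matrix (Fin n) (Fin n) F) - (y : Matrix (Fin n) (Fin n) F)) i i = 0
    simp [Matrix.sub_apply, hxy]
  -- diagonals differing everywhere implies adjacency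
  have key2 : ∀ x y : upperTri F n, (∀ i, (x : Matrix (Fin n) (Fin n) F) i i ≠ (y : Matrix (Fin n) (Fin n) F) i i) →
      (cayley F n).Adj x y := by
    intro x y h
    refine ⟨?_, (isUnitIffDiag (x - y)).2 fun i => ?_⟩
    · intro hxy
      exact h ⟨0, hn⟩ (by rw [hxy])
    · show ((x : Matrix (Fin n) (Fin n) F) - (y : Matrix (Fin n) (Fin n) F)) i i ≠ 0
      rw [Matrix.sub_apply, sub_ne_zero]
      exact h i
  have hbip : ∀ b ∈ P1, ∀ c ∈ P2, (cayley F n).Adj b c := by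
    intro b hb c hc
    exact key2 b c fun i => by rw [hb i]; exact (hc i).symm
  -- `a + 1` is in `P2`
  have ha1 : (a + 1 : upperTri F n) ∈ P2 := by
    intro i
    show ((a : Matrix (Fin n) (Fin n) F) + (1 : Matrix (Fin n) (Fin n) F)) i i ≠ (a : Matrix (Fin n) (Fin n) F) i i
    simp [Matrix.add_apply, Matrix.one_apply_eq]
  refine ⟨?_, hbip, ?_, ?_, ?_, ?_⟩
  · -- reachability characterization
    intro b
    constructor
    · intro hr
      obtain ⟨w⟩ := hr
      have aux : ∀ (x y : upperTri F n), (cayley F n).Walk x y →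
          x ∈ P1 ∪ P2 → y ∈ P1 ∪ P2 := by
        intro x y w
        induction w with
        | nil => exact id
        | cons hadj _ ih =>
          rename_i u v z hadj' w'
          intro hx
          apply ih
          rcases hx with hx | hx
          · right
            intro i
            rw [← hx i]
            exact (key1 _ _ hadj i).symm
          · left
            intro i
            exact eqOfNeNe hF (key1 _ _ hadj i).symm (hx i).symm
      exact aux a b w (Or.inl fun i => rfl)
    · rintro (hb | hb)
      · by_cases hba : b = a
        · subst hba; exact SimpleGraph.Reachable.refl b
        · exact ((hbip a (fun i => rfl) _ ha1).reachable).trans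
            ((hbip b hb _ ha1).symm.reachable)
      · exact (hbip a (fun i => rfl) b hb).reachable
  · -- no edges inside P1
    intro b hb c hc hadj
    exact key1 b c hadj ⟨0, hn⟩ (by rw [hb ⟨0, hn⟩, hc ⟨0, hn⟩])
  · -- no edges inside P2
    intro b hb c hc hadj
    exact key1 b c hadj ⟨0, hn⟩ (eqOfNeNe hF (hb ⟨0, hn⟩) (hc ⟨0, hn⟩))
  · exact cardFixedDiag hF _
  · -- P2 is the set of matrices with diagonal `a i i + 1`
    have hP2 : P2 = {b : upperTri F n | ∀ i, (b : Matrix (Fin n) (Fin n) F) i i = (a : Matrix (Fin n) (Fin n) F) i i + 1} := by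
      ext b
      constructor
      · intro hb i
        refine eqOfNeNe hF (hb i) ?_
        simp
      · intro hb i
        rw [hb i]
        simp
    rw [hP2]
    exact cardFixedDiag hF _
end

section
/- The clique number of the unitary Cayley graph C_{T_n(F)} equals |F|. -/
open Matrix

/-- The clique number of `C_{T_n(F)}` equals `|F|`. -/
theorem stmt11 (F : Type) [Field F] [Fintype F] (n : ℕ) (hn : 0 < n) :
    (cayley F n).cliqueNum = Fintype.card F := by
  classical
  have : Fintype (upperTri F n) := Fintype.ofFinite _
  -- embedding of F as scalar (diagonal constant) matrices
  set e : F → upperTri F n := fun c =>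
    ⟨Matrix.diagonal (fun _ => c), Matrix.blockTriangular_diagonal _⟩ with he
  have einj : Function.Injective e := by
    intro c d h
    have := congrArg (fun M : upperTri F n => (M : Matrix (Fin n) (Fin n) F) ⟨0, hn⟩ ⟨0, hn⟩) h
    simpa [he, Matrix.diagonal_apply_eq] using this
  apply le_antisymm
  · -- upper bound
    obtain ⟨s, hs⟩ := (cayley F n).exists_isNClique_cliqueNum
    rw [← hs.card_eq]
    have : Set.InjOn (fun x : upperTri F n =>
        (x : Matrix (Fin n) (Fin n) F) ⟨0, hn⟩ ⟨0, hn⟩) s := by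
      intro x hx y hy hxy
      by_contra hne
      obtain ⟨-, hu⟩ := hs.isClique hx hy hne
      have hu' : IsUnit ((x : Matrix (Fin n) (Fin n) F) - y) := by
        have := hu.map (upperTri F n).subtype
        simpa using this
      have hdet := (Matrix.isUnit_iff_isUnit_det _).mp hu'
      have htri : ((x : Matrix (Fin n) (Fin n) F) - y).BlockTriangular id :=
        (x.2).sub (y.2)
      rw [Matrix.det_of_upperTriangular htri] at hdet
      have hz : ((x : Matrix (Fin n) (Fin n) F) - y) ⟨0, hn⟩ ⟨0, hn⟩ = 0 := by
        simp [Matrix.sub_apply, hxy]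
      have : (∏ i : Fin n, ((x : Matrix (Fin n) (Fin n) F) - y) i i) = 0 :=
        Finset.prod_eq_zero (Finset.mem_univ ⟨0, hn⟩) hz
      rw [this] at hdet
      exact hdet.ne_zero rfl
    calc s.card ≤ (s.image (fun x : upperTri F n =>
          (x : Matrix (Fin n) (Fin n) F) ⟨0, hn⟩ ⟨0, hn⟩)).card := by
          rw [Finset.card_image_of_injOn this]
      _ ≤ Fintype.card F := Finset.card_le_univ _
  · -- lower bound: scalar matrices form a clique
    have hclique : (cayley F n).IsClique (Finset.image e Finset.univ) := by
      intro x hx y hy hxy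
      simp only [Finset.coe_image, Set.mem_image] at hx hy
      obtain ⟨c, -, rfl⟩ := hx
      obtain ⟨d, -, rfl⟩ := hy
      have hcd : c ≠ d := fun h => hxy (by rw [h])
      refine ⟨hxy, ?_⟩
      have hne : c - d ≠ 0 := sub_ne_zero.mpr hcd
      refine ⟨⟨e c - e d, ⟨Matrix.diagonal (fun _ => (c - d)⁻¹),
        Matrix.blockTriangular_diagonal _⟩, ?_, ?_⟩, rfl⟩ <;>
      · apply Subtype.ext
        push_cast [he]
        simp [Matrix.diagonal_sub, Matrix.diagonal_mul_diagonal, hne,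
          mul_inv_cancel₀, inv_mul_cancel₀]
    have := hclique.card_le_cliqueNum
    rwa [Finset.card_image_of_injective _ einj, Finset.card_univ] at this
end

section
/- The quotient of the graph C_{T_n(F)} by the equivalence relation 'equal diagonals' (with induced adjacency) is isomorphic to the antipodal Hamming graph A(H(n, |F|)): the graph on F^n where two vectors are adjacent iff they differ in every coordinate. -/
open Matrix

/-- The equivalence relation "equal diagonals" on `T_n(F)`. -/
def diagSetoid (F : Type) [Field F] (n : ℕ) : Setoid (upperTri F n) where
  r a b := ∀ i : Fin n, (a : Matrix (Fin n) (Fin n) F) i i = (b : Matrix (Fin n) (Fin n) F) i i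
  iseqv := ⟨fun _ _ => rfl, fun h i => (h i).symm, fun h1 h2 i => (h1 i).trans (h2 i)⟩

/-- The quotient of `C_{T_n(F)}` by the relation "equal diagonals": two classes are
adjacent iff some representatives are adjacent. -/
def diagQuot (F : Type) [Field F] (n : ℕ) [NeZero n] :
    SimpleGraph (Quotient (diagSetoid F n)) where
  Adj X Y := ∃ a b : upperTri F n,
    Quotient.mk (diagSetoid F n) a = X ∧ Quotient.mk (diagSetoid F n) b = Y ∧
      (cayley F n).Adj a b
  symm := ⟨fun _ _ ⟨a, b, ha, hb, h⟩ => ⟨b, a, hb, ha, h.symm⟩⟩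
  loopless := by
    constructor
    rintro X ⟨a, b, ha, hb, hne, hu⟩
    have heq : ∀ i : Fin n,
        (a : Matrix (Fin n) (Fin n) F) i i = (b : Matrix (Fin n) (Fin n) F) i i :=
      Quotient.exact (ha.trans hb.symm)
    have hu' : IsUnit ((a - b : upperTri F n) : Matrix (Fin n) (Fin n) F) :=
      hu.map (upperTri F n).subtype
    rw [Matrix.isUnit_iff_isUnit_det, Matrix.det_of_upperTriangular (a - b).2] at hu'
    have i0 : Fin n := ⟨0, Nat.pos_of_ne_zero (NeZero.ne n)⟩
    have hz : (∏ i : Fin n, ((a - b : upperTri F n) : Matrix (Fin n) (Fin n) F) i i) = 0 :=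
      Finset.prod_eq_zero (Finset.mem_univ i0) (by
        have h := heq i0
        push_cast [Matrix.sub_apply]
        rw [h, sub_self])
    rw [hz] at hu'
    exact hu'.ne_zero rfl

/-- The antipodal graph of the Hamming graph `H(n, |S|)`. -/
def antipodalHamming (S : Type) (n : ℕ) : SimpleGraph (Fin n → S) where
  Adj u v := u ≠ v ∧ ∀ i, u i ≠ v i
  symm := ⟨fun _ _ ⟨h1, h2⟩ => ⟨h1.symm, fun i => (h2 i).symm⟩⟩
  loopless := ⟨fun _ h => h.1 rfl⟩

def diagMat (F : Type) [Field F] (n : ℕ) (v : Fin n → F) : upperTri F n :=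
  ⟨Matrix.diagonal v, Matrix.blockTriangular_diagonal v⟩

lemma diagMat_unit (F : Type) [Field F] (n : ℕ) (w : Fin n → F) (h : ∀ i, w i ≠ 0) :
    IsUnit (diagMat F n w) := by
  have key : ∀ u v : Fin n → F, (∀ i, u i * v i = 1) →
      diagMat F n u * diagMat F n v = 1 := by
    intro u v huv
    apply Subtype.ext
    push_cast [diagMat]
    rw [Matrix.diagonal_mul_diagonal]
    convert Matrix.diagonal_one using 2
    exact funext huv
  exact ⟨⟨diagMat F n w, diagMat F n (fun i => (w i)⁻¹),
    key _ _ (fun i => mul_inv_cancel₀ (h i)),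
    key _ _ (fun i => inv_mul_cancel₀ (h i))⟩, rfl⟩

lemma adj_diag_ne (F : Type) [Field F] (n : ℕ) (a b : upperTri F n)
    (hu : IsUnit (a - b)) (i : Fin n) :
    (a : Matrix (Fin n) (Fin n) F) i i ≠ (b : Matrix (Fin n) (Fin n) F) i i := by
  intro heq
  have hu' : IsUnit ((a - b : upperTri F n) : Matrix (Fin n) (Fin n) F) :=
    hu.map (upperTri F n).subtype
  rw [Matrix.isUnit_iff_isUnit_det, Matrix.det_of_upperTriangular (a - b).2] at hu'
  have hz : (∏ j : Fin n, ((a - b : upperTri F n) : Matrix (Fin n) (Fin n) F) j j) = 0 :=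
    Finset.prod_eq_zero (Finset.mem_univ i) (by
      push_cast [Matrix.sub_apply]
      rw [heq, sub_self])
  rw [hz] at hu'
  exact hu'.ne_zero rfl

/-- The quotient of `C_{T_n(F)}` by the equivalence "equal diagonals" is isomorphic
to the antipodal Hamming graph `A(H(n, |F|))`. -/
theorem stmt15 (F : Type) [Field F] [Fintype F] (n : ℕ) [NeZero n] :
    Nonempty (diagQuot F n ≃g antipodalHamming F n) := by
  have i0 : Fin n := ⟨0, Nat.pos_of_ne_zero (NeZero.ne n)⟩
  refine ⟨⟨⟨Quotient.lift (fun a : upperTri F n => fun i => (a : Matrix (Fin n) (Fin n) F) i i)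
      (fun a b h => funext h),
    fun v => Quotient.mk (diagSetoid F n) (diagMat F n v), ?_, ?_⟩, ?_⟩⟩
  · intro X
    induction X using Quotient.ind with
    | _ a =>
      apply Quotient.sound
      intro i
      simp [diagMat]
  · intro v
    funext i
    simp [diagMat]
  · intro X Y
    induction X, Y using Quotient.inductionOn₂ with
    | _ a b =>
      constructor
      · rintro ⟨hne, hall⟩
        set da : Fin n → F := fun i => (a : Matrix (Fin n) (Fin n) F) i i with hda
        set db : Fin n → F := fun i => (b : Matrix (Fin n) (Fin n) F) i i with hdb
        refine ⟨diagMat F n da, diagMat F n db, ?_, ?_, ?_, ?_⟩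
        · exact Quotient.sound (fun i => by simp [diagMat, da])
        · exact Quotient.sound (fun i => by simp [diagMat, db])
        · intro h
          apply hall i0
          have := congrArg (fun M : upperTri F n => (M : Matrix (Fin n) (Fin n) F) i0 i0) h
          simpa [diagMat] using this
        · have : diagMat F n da - diagMat F n db = diagMat F n (da - db) := by
            apply Subtype.ext
            push_cast [diagMat]
            rw [Matrix.diagonal_sub]
            rfl
          rw [this]
          exact diagMat_unit F n _ (fun i => sub_ne_zero.mpr (hall i))
      · rintro ⟨x, y, hx, hy, hne, hu⟩
        have hxa := Quotient.exact hx
        have hyb := Quotient.exact hy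
        have hall : ∀ i, (a : Matrix (Fin n) (Fin n) F) i i ≠ (b : Matrix (Fin n) (Fin n) F) i i := by
          intro i
          rw [← hxa i, ← hyb i]
          exact adj_diag_ne F n x y hu i
        exact ⟨fun h => hall i0 (congrFun h i0), hall⟩
end
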